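/- Given positive integers 2 ≤ r ≤ n and positive integers s_2,...,s_r, there exists an integer N (depending on n and s_2,...,s_r) such that for any positive integer s_1 > N, the odd multiple harmonic sum H̄_n(s_1,s_2,...,s_r) is not an integer. -/
import Mathlib


open Finset

theorem odd_mhs_not_integer_s1_large (n r : ℕ) (hr : 2 ≤ r) (hrn : r ≤ n)
    (s : Fin r → ℕ) (hs : ∀ j : Fin r, j ≠ ⟨0, by omega⟩ → 1 ≤ s j) :
    ∃ N : ℕ, ∀ s₁ : ℕ, N < s₁ →
      ¬ ∃ m : ℤ,
        (∑ k ∈ Finset.univ.filter (fun k : Fin r → Fin n => ∀ i j : Fin r, i < j → k i < k j),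
          ∏ j, (1 : ℝ) / (2 * (k j : ℝ) + 1) ^ ((Function.update s ⟨0, by omega⟩ s₁) j)) = (m : ℝ) := by
  have hn : 0 < n := by omega
  have hfacpos : ∀ (e : ℕ) (c : Fin n), (0:ℝ) < 1 / (2 * (c:ℝ) + 1) ^ e := by
    intro e c; positivity
  have hfacle : ∀ (e : ℕ) (c : Fin n), (1:ℝ) / (2 * (c:ℝ) + 1) ^ e ≤ 1 := by
    intro e c
    rw [div_le_one (by positivity)]
    apply one_le_pow₀
    have : (0:ℝ) ≤ (c:ℝ) := by positivity
    linarith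
  rcases eq_or_lt_of_le hrn with heq | hlt
  · -- case r = n : the only strictly increasing tuple is the identity
    subst heq
    refine ⟨0, fun s₁ _ => ?_⟩
    rintro ⟨m, hm⟩
    have hK : (Finset.univ.filter
        (fun k : Fin r → Fin r => ∀ i j : Fin r, i < j → k i < k j)) = {id} := by
      ext k
      simp only [mem_filter, mem_univ, true_and, mem_singleton]
      constructor
      · intro hk
        have hsm : StrictMono k := fun i j h => hk i j h
        funext j
        exact le_antisymm hsm.apply_le
          (@StrictMono.le_apply (Fin r) (inferInstance : LinearOrder (Fin r))
            (inferInstance : WellFoundedLT (Fin r)) k hsm j)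
      · rintro rfl; exact fun i j h => h
    rw [hK, Finset.sum_singleton] at hm
    set u : Fin r → ℕ := Function.update s ⟨0, by omega⟩ s₁ with hu
    set j₁ : Fin r := ⟨1, by omega⟩ with hj₁
    have hTpos : (0:ℝ) < ∏ j, (1 : ℝ) / (2 * ((id j : Fin r) : ℝ) + 1) ^ (u j) :=
      Finset.prod_pos fun j _ => hfacpos _ _
    have hj1ne : j₁ ≠ (⟨0, by omega⟩ : Fin r) := by
      intro h; exact absurd (congrArg Fin.val h) (by simp [hj₁])
    have huj1 : u j₁ = s j₁ := Function.update_of_ne hj1ne _ _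
    have hs1 : 1 ≤ s j₁ := hs j₁ hj1ne
    have hfac1 : (1 : ℝ) / (2 * ((id j₁ : Fin r) : ℝ) + 1) ^ (u j₁) ≤ 1/3 := by
      have : ((j₁ : Fin r) : ℝ) = 1 := by norm_num [hj₁]
      rw [id_eq, this, huj1]
      have h3 : (3:ℝ) ≤ (2*(1:ℝ)+1) ^ (s j₁) := by
        have h4 : (2*(1:ℝ)+1) = 3 := by norm_num
        rw [h4]
        exact le_self_pow₀ (by norm_num) (by omega)
      exact one_div_le_one_div_of_le (by norm_num) h3
    have hTlt : (∏ j, (1 : ℝ) / (2 * ((id j : Fin r) : ℝ) + 1) ^ (u j)) < 1 := by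
      calc (∏ j, (1 : ℝ) / (2 * ((id j : Fin r) : ℝ) + 1) ^ (u j))
          = (1 : ℝ) / (2 * ((id j₁ : Fin r) : ℝ) + 1) ^ (u j₁) *
            ∏ j ∈ Finset.univ.erase j₁, (1 : ℝ) / (2 * ((id j : Fin r) : ℝ) + 1) ^ (u j) :=
            (Finset.mul_prod_erase _ _ (mem_univ j₁)).symm
        _ ≤ (1/3) * 1 := by
            apply mul_le_mul hfac1 (Finset.prod_le_one (fun j _ => le_of_lt (hfacpos _ _))
              (fun j _ => hfacle _ _)) (Finset.prod_nonneg fun j _ => le_of_lt (hfacpos _ _))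
              (by norm_num)
        _ < 1 := by norm_num
    have h1 : (0:ℝ) < (m:ℝ) := hm ▸ hTpos
    have h2 : (m:ℝ) < 1 := hm ▸ hTlt
    have h1' : (0:ℤ) < m := by exact_mod_cast h1
    have h2' : m < 1 := by exact_mod_cast h2
    omega
  · -- case r < n
    set z : Fin r := ⟨0, by omega⟩ with hz
    set K : Finset (Fin r → Fin n) :=
      Finset.univ.filter (fun k : Fin r → Fin n => ∀ i j : Fin r, i < j → k i < k j) with hK
    set zero : Fin n := ⟨0, hn⟩ with hzero
    set A : ℝ := ∑ k ∈ K.filter (fun k => k z = zero),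
      ∏ j, (1 : ℝ) / (2 * (k j : ℝ) + 1) ^ ((Function.update s z 1) j) with hA
    -- the sum over tuples with k z = 0 is independent of s₁
    have hAconst : ∀ s₁ : ℕ, (∑ k ∈ K.filter (fun k => k z = zero),
        ∏ j, (1 : ℝ) / (2 * (k j : ℝ) + 1) ^ ((Function.update s z s₁) j)) = A := by
      intro s₁
      refine Finset.sum_congr rfl fun k hk => Finset.prod_congr rfl fun j _ => ?_
      rcases eq_or_ne j z with hj | hj
      · have hk0 : k j = zero := by rw [hj]; exact (Finset.mem_filter.mp hk).2
        have h0 : ((k j : ℕ) : ℝ) = 0 := by rw [hk0]; simp [hzero]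
        rw [h0]
        norm_num
      · rw [Function.update_of_ne hj, Function.update_of_ne hj]
    -- the witness tuple with k z ≠ 0
    have hjlt : ∀ j : Fin r, (j : ℕ) + 1 < n := fun j => by omega
    have hkstar : ∃ k₀ ∈ K.filter (fun k => ¬ k z = zero), True := by
      refine ⟨fun j => ⟨(j : ℕ) + 1, hjlt j⟩, ?_, trivial⟩
      simp only [Finset.mem_filter, Finset.mem_univ, true_and, hK]
      refine ⟨fun i j hij => ?_, ?_⟩
      · have hij' : (i : ℕ) < (j : ℕ) := hij
        exact Fin.mk_lt_mk.mpr (by omega)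
      · intro h
        have h' : (z : ℕ) + 1 = 0 := by
          have := congrArg Fin.val h
          simpa [hzero] using this
        omega
    obtain ⟨k₀, hk₀, -⟩ := hkstar
    -- δ : gap above A to the next integer
    set δ : ℝ := (⌊A⌋ : ℝ) + 1 - A with hδ
    have hδpos : 0 < δ := by
      have := Int.lt_floor_add_one A
      simp only [hδ]; linarith
    have hcnn : (0:ℝ) ≤ (K.card : ℝ) := Nat.cast_nonneg _
    have hcpos : (0:ℝ) < (K.card : ℝ) + 1 := by linarith
    obtain ⟨N, hN⟩ := exists_pow_lt_of_lt_one (div_pos hδpos hcpos)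
      (show (1:ℝ)/3 < 1 by norm_num)
    refine ⟨N, fun s₁ hs₁ => ?_⟩
    rintro ⟨m, hm⟩
    set u : Fin r → ℕ := Function.update s z s₁ with hu
    -- split the sum
    have hsplit : (∑ k ∈ K, ∏ j, (1 : ℝ) / (2 * (k j : ℝ) + 1) ^ (u j))
        = A + ∑ k ∈ K.filter (fun k => ¬ k z = zero),
            ∏ j, (1 : ℝ) / (2 * (k j : ℝ) + 1) ^ (u j) := by
      rw [← Finset.sum_filter_add_sum_filter_not K (fun k => k z = zero), hAconst s₁]
    set ε : ℝ := ∑ k ∈ K.filter (fun k => ¬ k z = zero),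
      ∏ j, (1 : ℝ) / (2 * (k j : ℝ) + 1) ^ (u j) with hε
    have hεpos : 0 < ε := by
      refine Finset.sum_pos (fun k _ => Finset.prod_pos fun j _ => hfacpos _ _) ⟨k₀, hk₀⟩
    -- each term of ε is at most (1/3)^s₁
    have hterm : ∀ k ∈ K.filter (fun k => ¬ k z = zero),
        (∏ j, (1 : ℝ) / (2 * (k j : ℝ) + 1) ^ (u j)) ≤ ((1:ℝ)/3) ^ s₁ := by
      intro k hk
      have hkz : ¬ k z = zero := (Finset.mem_filter.mp hk).2
      have hkz1 : 1 ≤ (k z).val := by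
        rcases Nat.eq_zero_or_pos (k z).val with h0 | h1
        · exact absurd (Fin.ext (show (k z).val = zero.val by rw [hzero]; exact h0)) hkz
        · exact h1
      have huz : u z = s₁ := Function.update_self _ _ _
      have hfz : (1 : ℝ) / (2 * ((k z : ℕ) : ℝ) + 1) ^ (u z) ≤ ((1:ℝ)/3) ^ s₁ := by
        rw [huz, div_pow, one_pow]
        apply div_le_div_of_nonneg_left (by norm_num) (by positivity)
        apply pow_le_pow_left₀ (by norm_num)
        have : (1:ℝ) ≤ ((k z : ℕ) : ℝ) := by exact_mod_cast hkz1
        linarith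
      calc (∏ j, (1 : ℝ) / (2 * (k j : ℝ) + 1) ^ (u j))
          = (1 : ℝ) / (2 * (k z : ℝ) + 1) ^ (u z) *
            ∏ j ∈ Finset.univ.erase z, (1 : ℝ) / (2 * (k j : ℝ) + 1) ^ (u j) :=
            (Finset.mul_prod_erase _ _ (mem_univ z)).symm
        _ ≤ ((1:ℝ)/3) ^ s₁ * 1 := by
            apply mul_le_mul hfz (Finset.prod_le_one (fun j _ => le_of_lt (hfacpos _ _))
              (fun j _ => hfacle _ _)) (Finset.prod_nonneg fun j _ => le_of_lt (hfacpos _ _))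
              (by positivity)
        _ = ((1:ℝ)/3) ^ s₁ := mul_one _
    have hεle : ε ≤ (K.card : ℝ) * ((1:ℝ)/3) ^ s₁ := by
      calc ε ≤ (K.filter (fun k => ¬ k z = zero)).card • (((1:ℝ)/3) ^ s₁) :=
          Finset.sum_le_card_nsmul _ _ _ hterm
        _ = ((K.filter (fun k => ¬ k z = zero)).card : ℝ) * ((1:ℝ)/3) ^ s₁ := by
            rw [nsmul_eq_mul]
        _ ≤ (K.card : ℝ) * ((1:ℝ)/3) ^ s₁ := by
            apply mul_le_mul_of_nonneg_right _ (by positivity)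
            exact_mod_cast Finset.card_filter_le _ _
    have hεlt : ε < δ := by
      have h1 : ((1:ℝ)/3) ^ s₁ ≤ ((1:ℝ)/3) ^ N :=
        pow_le_pow_of_le_one (by norm_num) (by norm_num) (le_of_lt hs₁)
      have h2 : (K.card : ℝ) * ((1:ℝ)/3) ^ s₁ ≤ (K.card : ℝ) * (δ / ((K.card : ℝ) + 1)) := by
        apply mul_le_mul_of_nonneg_left _ hcnn
        exact le_of_lt (lt_of_le_of_lt h1 hN)
      have h3 : (K.card : ℝ) * (δ / ((K.card : ℝ) + 1)) < δ := by
        rw [mul_div_assoc', div_lt_iff₀ hcpos]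
        nlinarith
      linarith
    -- conclude
    rw [hsplit] at hm
    have hAm : A < (m:ℝ) := by linarith
    have hfloor : ⌊A⌋ < m := Int.floor_lt.mpr hAm
    have : ((⌊A⌋:ℝ) + 1) ≤ (m:ℝ) := by exact_mod_cast hfloor
    have : (m:ℝ) < (⌊A⌋:ℝ) + 1 := by
      simp only [hδ] at hεlt
      linarith
    linarith
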